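/- arXiv:1407.0055 — 2 statements merged into one kernel-verified Lean document; each statement's English description precedes it below -/
import Mathlib

section
/- Let g ∈ S(d) ⊂ C(d) be a pure permutation whose cycle type is an odd partition γ of d, and let C_γ be its conjugacy class in the Sergeev group C(d). Then C_γ and εC_γ are disjoint conjugacy classes. -/
/-- Relations of the Clifford group `Cliff(d)`: generators `ξ i = of (some i)` and
`ε = of none`, with `ξ i ² = 1`, `ε² = 1`, `ε` central, and
`ξ i ξ j = ε ξ j ξ i` for `i ≠ j`. -/
def cliffRels (d : ℕ) : Set (FreeGroup (Option (Fin d))) :=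
  {r | (∃ i : Fin d, r = .of (some i) * .of (some i)) ∨
    r = .of none * .of none ∨
    (∃ i : Fin d, r = .of none * .of (some i) * (.of none)⁻¹ * (.of (some i))⁻¹) ∨
    (∃ i j : Fin d, i ≠ j ∧
      r = .of (some i) * .of (some j) * ((.of none) * .of (some j) * .of (some i))⁻¹)}

/-- The Clifford group `Cliff(d)`. -/
def CliffordGroup (d : ℕ) : Type := PresentedGroup (cliffRels d)

instance (d : ℕ) : Group (CliffordGroup d) := by unfold CliffordGroup; infer_instance

/-- The generator `ξ i` of the Clifford group. -/
def cliffXi {d : ℕ} (i : Fin d) : CliffordGroup d := PresentedGroup.of (some i)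

/-- The central generator `ε` of the Clifford group. -/
def cliffEps (d : ℕ) : CliffordGroup d := PresentedGroup.of none


namespace Stmt8

/-- indicator bilinear form -/
def qf {d : ℕ} (v w : Fin d → ZMod 2) : ZMod 2 :=
  ∑ p : Fin d × Fin d, if p.2 < p.1 then v p.1 * w p.2 else 0

lemma qf_add_left {d : ℕ} (v w x : Fin d → ZMod 2) : qf (v + w) x = qf v x + qf w x := by
  unfold qf
  rw [← Finset.sum_add_distrib]
  refine Finset.sum_congr rfl fun p _ => ?_
  by_cases h : p.2 < p.1 <;> simp [h]; ring

lemma qf_add_right {d : ℕ} (v w x : Fin d → ZMod 2) : qf v (w + x) = qf v w + qf v x := by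
  unfold qf
  rw [← Finset.sum_add_distrib]
  refine Finset.sum_congr rfl fun p _ => ?_
  by_cases h : p.2 < p.1 <;> simp [h]; ring

@[simp] lemma qf_zero_left {d : ℕ} (x : Fin d → ZMod 2) : qf 0 x = 0 := by
  unfold qf; apply Finset.sum_eq_zero; intro p _; split <;> simp

@[simp] lemma qf_zero_right {d : ℕ} (x : Fin d → ZMod 2) : qf x 0 = 0 := by
  unfold qf; apply Finset.sum_eq_zero; intro p _; split <;> simp

lemma qf_single_single {d : ℕ} (i j : Fin d) :
    qf (Pi.single i 1) (Pi.single j 1) = if j < i then 1 else 0 := by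
  unfold qf
  rw [Finset.sum_eq_single (i, j)]
  · simp
  · intro p _ hp
    have : p.1 ≠ i ∨ p.2 ≠ j := by
      by_contra h; push_neg at h; exact hp (Prod.ext h.1 h.2)
    rcases this with h | h <;> simp [Pi.single_apply, h]
  · simp

lemma addself {d : ℕ} (v : Fin d → ZMod 2) : v + v = 0 :=
  funext fun i => CharTwo.add_self_eq_zero _

/-- The concrete model of the Clifford group: `ZMod 2 × (ZMod 2)^d` with a
cocycle-twisted multiplication. -/
structure CW (d : ℕ) where
  s : ZMod 2
  v : Fin d → ZMod 2

instance (d : ℕ) : Mul (CW d) := ⟨fun a b => ⟨a.s + b.s + qf a.v b.v, a.v + b.v⟩⟩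
instance (d : ℕ) : One (CW d) := ⟨⟨0, 0⟩⟩
instance (d : ℕ) : Inv (CW d) := ⟨fun a => ⟨a.s + qf a.v a.v, a.v⟩⟩

@[simp] lemma CW.mul_s {d : ℕ} (a b : CW d) : (a * b).s = a.s + b.s + qf a.v b.v := rfl
@[simp] lemma CW.mul_v {d : ℕ} (a b : CW d) : (a * b).v = a.v + b.v := rfl
@[simp] lemma CW.inv_s {d : ℕ} (a : CW d) : (a⁻¹).s = a.s + qf a.v a.v := rfl
@[simp] lemma CW.inv_v {d : ℕ} (a : CW d) : (a⁻¹).v = a.v := rfl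
@[simp] lemma CW.one_s {d : ℕ} : (1 : CW d).s = 0 := rfl
@[simp] lemma CW.one_v {d : ℕ} : (1 : CW d).v = 0 := rfl

@[ext] lemma CW.ext' {d : ℕ} {a b : CW d} (h1 : a.s = b.s) (h2 : a.v = b.v) : a = b := by
  cases a; cases b; simp_all

instance (d : ℕ) : Group (CW d) where
  mul_assoc a b c := by
    ext
    · simp only [CW.mul_s, CW.mul_v, qf_add_left, qf_add_right]; ring
    · simp only [CW.mul_v]; ring
  one_mul a := by ext <;> simp
  mul_one a := by ext <;> simp
  inv_mul_cancel a := by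
    ext
    · simp only [CW.mul_s, CW.inv_s, CW.inv_v, CW.one_s]
      rw [show a.s + qf a.v a.v + a.s + qf a.v a.v
          = (a.s + qf a.v a.v) + (a.s + qf a.v a.v) by ring, CharTwo.add_self_eq_zero]
    · simp only [CW.mul_v, CW.inv_v, CW.one_v, addself]

end Stmt8

namespace Stmt8

/-- generators in CW -/
def gen {d : ℕ} : Option (Fin d) → CW d
  | none => ⟨1, 0⟩
  | some i => ⟨0, Pi.single i 1⟩

/-- quadratic refinement used to twist the permutation action -/
def Rq {d : ℕ} (g : Equiv.Perm (Fin d)) (v : Fin d → ZMod 2) : ZMod 2 :=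
  ∑ p : Fin d × Fin d, if p.2 < p.1 ∧ g p.1 < g p.2 then v p.1 * v p.2 else 0

def qf' {d : ℕ} (g : Equiv.Perm (Fin d)) (v w : Fin d → ZMod 2) : ZMod 2 :=
  ∑ p : Fin d × Fin d, if g p.2 < g p.1 then v p.1 * w p.2 else 0

lemma qf_comp {d : ℕ} (g : Equiv.Perm (Fin d)) (v w : Fin d → ZMod 2) :
    qf (v ∘ ⇑g⁻¹) (w ∘ ⇑g⁻¹) = qf' g v w := by
  unfold qf qf'
  rw [← Equiv.sum_comp (Equiv.prodCongr g g)]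
  refine Finset.sum_congr rfl fun p _ => ?_
  simp [Equiv.prodCongr_apply]

@[simp] lemma Rq_zero {d : ℕ} (g : Equiv.Perm (Fin d)) : Rq g 0 = 0 := by
  unfold Rq; apply Finset.sum_eq_zero; intro p _; split <;> simp

lemma Rq_single {d : ℕ} (g : Equiv.Perm (Fin d)) (i : Fin d) :
    Rq g (Pi.single i 1) = 0 := by
  unfold Rq
  apply Finset.sum_eq_zero; intro p _
  split
  · rename_i h
    rcases eq_or_ne p.1 i with h1 | h1
    · rcases eq_or_ne p.2 i with h2 | h2
      · exact absurd (h1.trans h2.symm) (ne_of_gt h.1)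
      · simp [Pi.single_apply, h2]
    · simp [Pi.single_apply, h1]
  · rfl

lemma ptws {d : ℕ} (g : Equiv.Perm (Fin d)) (i j : Fin d) (x : ZMod 2) :
    ((if j < i ∧ g i < g j then x else 0) + if i < j ∧ g j < g i then x else 0)
      = (if j < i then x else 0) + if g j < g i then x else 0 := by
  rcases lt_trichotomy i j with h | h | h
  · rcases (g.injective.ne (ne_of_lt h)).lt_or_gt with h2 | h2
    · simp [h, h.asymm, h2, h2.asymm]
    · simp [h, h.asymm, h2, h2.asymm]
  · subst h; simp [lt_irrefl]
  · rcases (g.injective.ne (ne_of_gt h)).lt_or_gt with h2 | h2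
    · simp [h, h.asymm, h2, h2.asymm]
    · simp only [h, h.asymm, h2, h2.asymm, and_true, and_false, if_true, if_false,
        false_and, if_neg (fun c : False => c)]
      simp [CharTwo.add_self_eq_zero]

/-- the key polarization identity -/
lemma Rq_add {d : ℕ} (g : Equiv.Perm (Fin d)) (v w : Fin d → ZMod 2) :
    Rq g (v + w) = Rq g v + Rq g w + qf v w + qf' g v w := by
  have swapped : ∑ p : Fin d × Fin d, (if p.2 < p.1 ∧ g p.1 < g p.2 then w p.1 * v p.2 else 0)
      = ∑ p : Fin d × Fin d, (if p.1 < p.2 ∧ g p.2 < g p.1 then v p.1 * w p.2 else 0) := by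
    rw [← Equiv.sum_comp (Equiv.prodComm (Fin d) (Fin d))]
    refine Finset.sum_congr rfl fun p _ => ?_
    simp only [Equiv.prodComm_apply, Prod.snd_swap, Prod.fst_swap]
    rw [mul_comm]
    rfl
  have cross : (∑ p : Fin d × Fin d, (if p.2 < p.1 ∧ g p.1 < g p.2 then v p.1 * w p.2 else 0))
      + (∑ p : Fin d × Fin d, (if p.1 < p.2 ∧ g p.2 < g p.1 then v p.1 * w p.2 else 0))
      = qf v w + qf' g v w := by
    unfold qf qf'
    rw [← Finset.sum_add_distrib, ← Finset.sum_add_distrib]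
    exact Finset.sum_congr rfl fun p _ => ptws g p.1 p.2 _
  unfold Rq
  calc ∑ p : Fin d × Fin d, (if p.2 < p.1 ∧ g p.1 < g p.2 then (v+w) p.1 * (v+w) p.2 else 0)
      = (∑ p : Fin d × Fin d, (if p.2 < p.1 ∧ g p.1 < g p.2 then v p.1 * v p.2 else 0))
        + (∑ p : Fin d × Fin d, (if p.2 < p.1 ∧ g p.1 < g p.2 then w p.1 * w p.2 else 0))
        + ((∑ p : Fin d × Fin d, (if p.2 < p.1 ∧ g p.1 < g p.2 then v p.1 * w p.2 else 0))
        + (∑ p : Fin d × Fin d, (if p.2 < p.1 ∧ g p.1 < g p.2 then w p.1 * v p.2 else 0))) := by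
        rw [← Finset.sum_add_distrib, ← Finset.sum_add_distrib, ← Finset.sum_add_distrib]
        refine Finset.sum_congr rfl fun p _ => ?_
        split
        · simp only [Pi.add_apply]; ring
        · simp
    _ = Rq g v + Rq g w + qf v w + qf' g v w := by
        rw [swapped, cross]; unfold Rq; ring

/-- the automorphism of CW induced by a permutation -/
def psi {d : ℕ} (g : Equiv.Perm (Fin d)) : CW d →* CW d where
  toFun a := ⟨a.s + Rq g a.v, a.v ∘ ⇑g⁻¹⟩
  map_one' := by
    refine CW.ext' ?_ ?_
    · show (1 : CW d).s + Rq g (1 : CW d).v = (1 : CW d).s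
      simp
    · show (1 : CW d).v ∘ ⇑g⁻¹ = (1 : CW d).v
      funext x; rfl
  map_mul' a b := by
    refine CW.ext' ?_ ?_
    · show (a * b).s + Rq g (a * b).v
        = ((a.s + Rq g a.v) + (b.s + Rq g b.v)) + qf (a.v ∘ ⇑g⁻¹) (b.v ∘ ⇑g⁻¹)
      rw [qf_comp, CW.mul_s, CW.mul_v, Rq_add]
      ring_nf
      rw [show qf a.v b.v * 2 = 0 by rw [mul_two, CharTwo.add_self_eq_zero]]
      ring
    · show (a * b).v ∘ ⇑g⁻¹ = a.v ∘ ⇑g⁻¹ + b.v ∘ ⇑g⁻¹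
      funext x; rfl

end Stmt8

namespace Stmt8

lemma gen_rels (d : ℕ) : ∀ r ∈ cliffRels d, FreeGroup.lift (gen (d := d)) r = 1 := by
  intro r hr
  rcases hr with ⟨i, rfl⟩ | rfl | ⟨i, rfl⟩ | ⟨i, j, hij, rfl⟩
  · refine CW.ext' ?_ ?_ <;>
      simp [gen, qf_single_single, addself]
  · refine CW.ext' ?_ ?_ <;> simp [gen] <;> decide
  · refine CW.ext' ?_ ?_ <;>
      simp [gen, qf_single_single, addself] <;> decide
  · have h1 : qf (Pi.single i 1 + Pi.single j 1) (Pi.single i 1 + Pi.single j 1)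
        = (1 : ZMod 2) := by
      rw [qf_add_left, qf_add_right, qf_add_right, qf_single_single, qf_single_single,
        qf_single_single, qf_single_single]
      rcases hij.lt_or_gt with h | h <;>
        simp [h, h.asymm, lt_irrefl, CharTwo.add_self_eq_zero]
    refine CW.ext' ?_ ?_
    · simp [gen, qf_add_left, qf_add_right, qf_single_single, h1, addself]
      rcases lt_or_ge j i with h | h
      · simp [h]
        try decide
      · simp [not_lt.mpr h]
        try decide
    · simp [gen, qf_add_left, qf_add_right, qf_single_single, h1, addself]

/-- the homomorphism from the Clifford group to the concrete model -/
def fhom (d : ℕ) : CliffordGroup d →* CW d := PresentedGroup.toGroup (gen_rels d)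

@[simp] lemma fhom_xi {d : ℕ} (i : Fin d) : fhom d (cliffXi i) = ⟨0, Pi.single i 1⟩ :=
  PresentedGroup.toGroup.of (gen_rels d)

@[simp] lemma fhom_eps {d : ℕ} : fhom d (cliffEps d) = ⟨1, 0⟩ :=
  PresentedGroup.toGroup.of (gen_rels d)

lemma single_comp_inv {d : ℕ} (g : Equiv.Perm (Fin d)) (i : Fin d) :
    (Pi.single i (1 : ZMod 2)) ∘ ⇑g⁻¹ = Pi.single (g i) 1 := by
  funext x
  simp only [Function.comp_apply, Pi.single_apply]
  congr 1
  simp only [eq_iff_iff]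
  constructor
  · rintro rfl; simp
  · rintro rfl; simp

lemma fhom_equivariant {d : ℕ} (φ : Equiv.Perm (Fin d) →* MulAut (CliffordGroup d))
    (hφ : ∀ (σ : Equiv.Perm (Fin d)) (i : Fin d), φ σ (cliffXi i) = cliffXi (σ i))
    (hφε : ∀ σ : Equiv.Perm (Fin d), φ σ (cliffEps d) = cliffEps d)
    (g : Equiv.Perm (Fin d)) (a : CliffordGroup d) :
    fhom d (φ g a) = psi g (fhom d a) := by
  have : (fhom d).comp (φ g).toMonoidHom = (psi g).comp (fhom d) := by
    apply PresentedGroup.ext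
    intro x
    match x with
    | none =>
      show fhom d (φ g (cliffEps d)) = psi g (fhom d (cliffEps d))
      rw [hφε, fhom_eps]
      refine (CW.ext' ?_ ?_).symm
      · show (1 : ZMod 2) + Rq g 0 = 1
        simp
      · show (0 : Fin d → ZMod 2) ∘ ⇑g⁻¹ = 0
        rfl
    | some i =>
      show fhom d (φ g (cliffXi i)) = psi g (fhom d (cliffXi i))
      rw [hφ, fhom_xi, fhom_xi]
      refine (CW.ext' ?_ ?_).symm
      · show (0 : ZMod 2) + Rq g (Pi.single i 1) = 0
        simp [Rq_single]
      · show (Pi.single i (1 : ZMod 2)) ∘ ⇑g⁻¹ = Pi.single (g i) 1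
        exact single_comp_inv g i
  exact DFunLike.congr_fun this a

lemma rel_one {d : ℕ} (r : FreeGroup (Option (Fin d))) (hr : r ∈ cliffRels d) :
    PresentedGroup.mk (cliffRels d) r = 1 :=
  (QuotientGroup.eq_one_iff _).2 (Subgroup.subset_normalClosure hr)

lemma eps_central {d : ℕ} (x : CliffordGroup d) :
    cliffEps d * x = x * cliffEps d := by
  have hx : x ∈ Subgroup.centralizer {cliffEps d} := by
    apply PresentedGroup.generated_by
    intro j
    refine Subgroup.mem_centralizer_iff.2 ?_
    rintro y rfl
    match j with
    | none => rfl
    | some i =>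
      have h := rel_one _ (Or.inr (Or.inr (Or.inl ⟨i, rfl⟩)))
      simp only [map_mul, map_inv] at h
      have h' : cliffEps d * cliffXi i * (cliffEps d)⁻¹ * (cliffXi i)⁻¹ = 1 := h
      calc cliffEps d * cliffXi i
          = (cliffEps d * cliffXi i * (cliffEps d)⁻¹ * (cliffXi i)⁻¹) * (cliffXi i * cliffEps d)
            := by group
        _ = cliffXi i * cliffEps d := by rw [h']; group
  exact Subgroup.mem_centralizer_iff.1 hx _ rfl


/-- mod-2 count of inversion pairs of `h` between `A` and `B` -/
def cnt {d : ℕ} (h : Equiv.Perm (Fin d)) (A B : Finset (Fin d)) : ZMod 2 :=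
  ∑ p : Fin d × Fin d, if p.1 ∈ A ∧ p.2 ∈ B ∧ p.2 < p.1 ∧ h p.1 < h p.2 then 1 else 0

lemma mem_invariant {d : ℕ} (h : Equiv.Perm (Fin d)) {A : Finset (Fin d)}
    (hA : ∀ i ∈ A, h i ∈ A) : ∀ i, h i ∈ A ↔ i ∈ A := by
  have himg : A.image h = A := by
    apply Finset.eq_of_subset_of_card_le
    · intro x hx
      obtain ⟨j, hj, rfl⟩ := Finset.mem_image.1 hx
      exact hA j hj
    · rw [Finset.card_image_of_injective _ h.injective]
  intro i
  constructor
  · intro hi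
    rw [← himg] at hi
    obtain ⟨j, hj, hji⟩ := Finset.mem_image.1 hi
    cases h.injective hji
    exact hj
  · exact hA i

lemma mem_invariant_inv {d : ℕ} (h : Equiv.Perm (Fin d)) {A : Finset (Fin d)}
    (hA : ∀ i ∈ A, h i ∈ A) : ∀ i, h⁻¹ i ∈ A ↔ i ∈ A := by
  intro i
  conv_rhs => rw [show i = h (h⁻¹ i) by simp]
  exact (mem_invariant h hA _).symm

lemma cnt_union_left {d : ℕ} (h : Equiv.Perm (Fin d)) {A B : Finset (Fin d)}
    (C : Finset (Fin d)) (hd : Disjoint A B) :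
    cnt h (A ∪ B) C = cnt h A C + cnt h B C := by
  unfold cnt
  rw [← Finset.sum_add_distrib]
  refine Finset.sum_congr rfl fun p _ => ?_
  by_cases h1 : p.1 ∈ A
  · have h2 : p.1 ∉ B := fun hc => (Finset.disjoint_left.1 hd h1) hc
    simp [h1, h2]
  · by_cases h2 : p.1 ∈ B <;> simp [h1, h2]

lemma cnt_union_right {d : ℕ} (h : Equiv.Perm (Fin d)) {A B : Finset (Fin d)}
    (C : Finset (Fin d)) (hd : Disjoint A B) :
    cnt h C (A ∪ B) = cnt h C A + cnt h C B := by
  unfold cnt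
  rw [← Finset.sum_add_distrib]
  refine Finset.sum_congr rfl fun p _ => ?_
  by_cases h1 : p.2 ∈ A
  · have h2 : p.2 ∉ B := fun hc => (Finset.disjoint_left.1 hd h1) hc
    simp [h1, h2]
  · by_cases h2 : p.2 ∈ B <;> simp [h1, h2]

lemma cnt_cross {d : ℕ} (h : Equiv.Perm (Fin d)) {A B : Finset (Fin d)}
    (hA : ∀ i ∈ A, h i ∈ A) (hB : ∀ i ∈ B, h i ∈ B) :
    cnt h A B + cnt h B A = 0 := by
  have swapBA : cnt h B A = ∑ p : Fin d × Fin d,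
      if p.1 ∈ A ∧ p.2 ∈ B ∧ p.1 < p.2 ∧ h p.2 < h p.1 then 1 else 0 := by
    unfold cnt
    rw [← Equiv.sum_comp (Equiv.prodComm (Fin d) (Fin d))]
    refine Finset.sum_congr rfl fun p _ => ?_
    simp only [Equiv.prodComm_apply, Prod.fst_swap, Prod.snd_swap]
    congr 1
    simp only [eq_iff_iff]
    tauto
  have key : cnt h A B + cnt h B A
      = (∑ p : Fin d × Fin d, if p.1 ∈ A ∧ p.2 ∈ B ∧ p.2 < p.1 then 1 else 0)
        + ∑ p : Fin d × Fin d, if p.1 ∈ A ∧ p.2 ∈ B ∧ h p.2 < h p.1 then 1 else 0 := by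
    rw [swapBA]
    unfold cnt
    rw [← Finset.sum_add_distrib, ← Finset.sum_add_distrib]
    refine Finset.sum_congr rfl fun p _ => ?_
    by_cases hm : p.1 ∈ A ∧ p.2 ∈ B
    · simp only [hm.1, hm.2, true_and]
      exact ptws h p.1 p.2 1
    · have h1 : ¬(p.1 ∈ A ∧ p.2 ∈ B ∧ p.2 < p.1 ∧ h p.1 < h p.2) := fun c => hm ⟨c.1, c.2.1⟩
      have h2 : ¬(p.1 ∈ A ∧ p.2 ∈ B ∧ p.1 < p.2 ∧ h p.2 < h p.1) := fun c => hm ⟨c.1, c.2.1⟩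
      have h3 : ¬(p.1 ∈ A ∧ p.2 ∈ B ∧ p.2 < p.1) := fun c => hm ⟨c.1, c.2.1⟩
      have h4 : ¬(p.1 ∈ A ∧ p.2 ∈ B ∧ h p.2 < h p.1) := fun c => hm ⟨c.1, c.2.1⟩
      rw [if_neg h1, if_neg h2, if_neg h3, if_neg h4, add_zero]
  have reidx : (∑ p : Fin d × Fin d, if p.1 ∈ A ∧ p.2 ∈ B ∧ h p.2 < h p.1 then 1 else 0 : ZMod 2)
      = ∑ p : Fin d × Fin d, if p.1 ∈ A ∧ p.2 ∈ B ∧ p.2 < p.1 then 1 else 0 := by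
    rw [← Equiv.sum_comp (Equiv.prodCongr h⁻¹ h⁻¹)]
    refine Finset.sum_congr rfl fun p _ => ?_
    simp only [Equiv.prodCongr_apply, Prod.map]
    congr 1
    simp only [eq_iff_iff, show ∀ x, h (h⁻¹ x) = x from h.apply_symm_apply,
      mem_invariant_inv h hA p.1, mem_invariant_inv h hB p.2]
  rw [key, reidx, CharTwo.add_self_eq_zero]

lemma cnt_idfix {d : ℕ} (h : Equiv.Perm (Fin d)) {A B : Finset (Fin d)}
    (hA : ∀ i ∈ A, h i = i) (hB : ∀ i ∈ B, h i = i) : cnt h A B = 0 := by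
  unfold cnt
  apply Finset.sum_eq_zero
  intro p _
  rw [if_neg]
  rintro ⟨h1, h2, h3, h4⟩
  rw [hA _ h1, hB _ h2] at h4
  exact absurd h3 h4.asymm

lemma cnt_congr {d : ℕ} (h h' : Equiv.Perm (Fin d)) {A B : Finset (Fin d)}
    (hA : ∀ i ∈ A, h i = h' i) (hB : ∀ i ∈ B, h i = h' i) : cnt h A B = cnt h' A B := by
  unfold cnt
  refine Finset.sum_congr rfl fun p _ => ?_
  by_cases hm : p.1 ∈ A ∧ p.2 ∈ B
  · rw [hA _ hm.1, hB _ hm.2]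
  · rw [if_neg (fun c => hm ⟨c.1, c.2.1⟩), if_neg (fun c => hm ⟨c.1, c.2.1⟩)]

lemma signAux_eq_sign {d : ℕ} (h : Equiv.Perm (Fin d)) :
    Equiv.Perm.signAux h = Equiv.Perm.sign h := by
  refine Equiv.Perm.swap_induction_on h (by simp [Equiv.Perm.signAux_one]) ?_
  intro f x y hxy ih
  rw [Equiv.Perm.signAux_mul, Equiv.Perm.signAux_swap hxy, map_mul,
    Equiv.Perm.sign_swap hxy, ih]

lemma cnt_univ {d : ℕ} (h : Equiv.Perm (Fin d)) (hs : Equiv.Perm.sign h = 1) :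
    cnt h Finset.univ Finset.univ = 0 := by
  have hpow : Equiv.Perm.signAux h
      = (-1 : ℤˣ) ^ ((Equiv.Perm.finPairsLT d).filter fun x => h x.1 ≤ h x.2).card := by
    unfold Equiv.Perm.signAux
    rw [Finset.prod_ite, Finset.prod_const, Finset.prod_const, one_pow, mul_one]
  have heven : Even ((Equiv.Perm.finPairsLT d).filter fun x => h x.1 ≤ h x.2).card := by
    rw [signAux_eq_sign, hs] at hpow
    by_contra hodd
    rw [Nat.not_even_iff_odd] at hodd
    rw [hodd.neg_one_pow] at hpow
    exact absurd hpow.symm (by decide)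
  have hcard : cnt h Finset.univ Finset.univ
      = (((Equiv.Perm.finPairsLT d).filter fun x => h x.1 ≤ h x.2).card : ZMod 2) := by
    unfold cnt
    simp only [Finset.mem_univ, true_and]
    rw [Finset.sum_boole]
    congr 1
    refine (Finset.card_bij (fun x _ => (x.1, x.2)) ?_ ?_ ?_).symm
    · intro x hx
      rw [Finset.mem_filter] at hx ⊢
      obtain ⟨hm, hle⟩ := hx
      rw [Equiv.Perm.mem_finPairsLT] at hm
      refine ⟨Finset.mem_univ _, hm, lt_of_le_of_ne hle (h.injective.ne (ne_of_gt hm))⟩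
    · intro x hx y hy hxy
      rw [Prod.mk.injEq] at hxy
      exact Sigma.ext hxy.1 (heq_of_eq hxy.2)
    · intro p hp
      rw [Finset.mem_filter] at hp
      refine ⟨⟨p.1, p.2⟩, ?_, rfl⟩
      rw [Finset.mem_filter, Equiv.Perm.mem_finPairsLT]
      exact ⟨hp.2.1, hp.2.2.le⟩
  rw [hcard]
  obtain ⟨k, hk⟩ := heven
  rw [hk]
  push_cast
  rw [CharTwo.add_self_eq_zero]

lemma zpow_mem_of_invariant {d : ℕ} (g : Equiv.Perm (Fin d)) {S : Finset (Fin d)}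
    (hS : ∀ i ∈ S, g i ∈ S) {i : Fin d} (hi : i ∈ S) : ∀ n : ℤ, (g ^ n) i ∈ S := by
  intro n
  induction n using Int.induction_on with
  | zero => simpa using hi
  | succ n ih =>
    have h1 : (g ^ ((n : ℤ) + 1)) i = g ((g ^ (n : ℤ)) i) := by
      rw [add_comm, zpow_add, zpow_one, Equiv.Perm.mul_apply]
    rw [h1]
    exact hS _ ih
  | pred n ih =>
    have h1 : (g ^ (-(n : ℤ) - 1)) i = g⁻¹ ((g ^ (-(n : ℤ))) i) := by
      rw [sub_eq_add_neg, add_comm, zpow_add, zpow_neg_one, Equiv.Perm.mul_apply]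
    rw [h1, mem_invariant_inv g hS]
    exact ih

lemma crux {d : ℕ} (g : Equiv.Perm (Fin d))
    (hodd : ∀ i ∈ g.support, Odd (g.cycleOf i).support.card)
    (S : Finset (Fin d)) (hS : ∀ i ∈ S, g i ∈ S) : cnt g S S = 0 := by
  induction S using Finset.strongInduction with
  | _ S ih =>
  by_cases hfix : ∀ i ∈ S, g i = i
  · exact cnt_idfix g hfix hfix
  push_neg at hfix
  obtain ⟨i, hiS, hig⟩ := hfix
  have hisup : i ∈ g.support := Equiv.Perm.mem_support.2 hig
  set c := g.cycleOf i with hc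
  set C := c.support with hCdef
  have hiC : i ∈ C := Equiv.Perm.mem_support_cycleOf_iff.2 ⟨Equiv.Perm.SameCycle.refl g i, hisup⟩
  have hgc : ∀ x ∈ C, g x = c x := by
    intro x hx
    exact ((Equiv.Perm.mem_support_cycleOf_iff.1 hx).1.cycleOf_apply).symm
  have hCg : ∀ x ∈ C, g x ∈ C := by
    intro x hx
    rw [hgc x hx]
    exact Equiv.Perm.apply_mem_support.2 hx
  have hCS : C ⊆ S := by
    intro x hx
    obtain ⟨n, hn⟩ := (Equiv.Perm.mem_support_cycleOf_iff.1 hx).1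
    exact hn ▸ zpow_mem_of_invariant g hS hiS n
  set D := S \ C with hDdef
  have hCD : Disjoint C D := Finset.disjoint_sdiff
  have hDg : ∀ x ∈ D, g x ∈ D := by
    intro x hx
    rw [Finset.mem_sdiff] at hx ⊢
    exact ⟨hS _ hx.1, fun hc2 => hx.2 ((mem_invariant g hCg x).1 hc2)⟩
  have hunion : S = C ∪ D := by
    rw [hDdef, Finset.union_sdiff_of_subset hCS]
  have hsplit : cnt g S S = cnt g C C + cnt g C D + cnt g D C + cnt g D D := by
    rw [hunion, cnt_union_left g _ hCD, cnt_union_right g _ hCD, cnt_union_right g _ hCD]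
    ring
  have hcross : cnt g C D + cnt g D C = 0 := cnt_cross g hCg hDg
  have hDD : cnt g D D = 0 := by
    refine ih D ?_ hDg
    exact Finset.ssubset_iff_of_subset (hunion ▸ Finset.subset_union_right)
      |>.2 ⟨i, hiS, fun hiD => (Finset.mem_sdiff.1 hiD).2 hiC⟩
  have hCC : cnt g C C = 0 := by
    have hcyc : c.IsCycle := g.isCycle_cycleOf hig
    have hsign : Equiv.Perm.sign c = 1 := by
      rw [hcyc.sign, (hodd i hisup).neg_one_pow, neg_neg]
    have huniv : cnt c Finset.univ Finset.univ = 0 := cnt_univ c hsign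
    have hcompl : Finset.univ = C ∪ Cᶜ := by simp
    have hCc : ∀ x ∈ C, c x ∈ C := fun x hx => Equiv.Perm.apply_mem_support.2 hx
    have hCcompl : ∀ x ∈ Cᶜ, c x = x := by
      intro x hx
      rw [Finset.mem_compl] at hx
      exact Equiv.Perm.notMem_support.1 hx
    have hCcomplinv : ∀ x ∈ Cᶜ, c x ∈ Cᶜ := fun x hx => (hCcompl x hx).symm ▸ hx
    have h4 : cnt c Finset.univ Finset.univ
        = cnt c C C + cnt c C Cᶜ + cnt c Cᶜ C + cnt c Cᶜ Cᶜ := by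
      rw [hcompl, cnt_union_left c _ disjoint_compl_right,
        cnt_union_right c _ disjoint_compl_right,
        cnt_union_right c _ disjoint_compl_right]
      ring
    have hcross2 : cnt c C Cᶜ + cnt c Cᶜ C = 0 := cnt_cross c hCc hCcomplinv
    have hzero : cnt c Cᶜ Cᶜ = 0 := cnt_idfix c hCcompl hCcompl
    have hgC : cnt g C C = cnt c C C := cnt_congr g c hgc hgc
    rw [hgC]
    linear_combination huniv - h4 - hcross2 - hzero
  linear_combination hsplit + hcross + hDD + hCC

@[simp] lemma psi_s {d : ℕ} (g : Equiv.Perm (Fin d)) (a : CW d) :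
    (psi g a).s = a.s + Rq g a.v := rfl
@[simp] lemma psi_v {d : ℕ} (g : Equiv.Perm (Fin d)) (a : CW d) :
    (psi g a).v = a.v ∘ ⇑g⁻¹ := rfl

lemma Rq_eq_cnt {d : ℕ} (g : Equiv.Perm (Fin d)) (v : Fin d → ZMod 2) :
    Rq g v = cnt g (Finset.univ.filter fun i => v i = 1) (Finset.univ.filter fun i => v i = 1)
    := by
  unfold Rq cnt
  refine Finset.sum_congr rfl fun p _ => ?_
  have h01 : ∀ x : ZMod 2, x = 0 ∨ x = 1 := by decide
  by_cases hc : p.2 < p.1 ∧ g p.1 < g p.2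
  · rcases h01 (v p.1) with h1 | h1 <;> rcases h01 (v p.2) with h2 | h2 <;>
      simp [hc.1, hc.2, h1, h2, Finset.mem_filter]
  · rw [if_neg hc, if_neg (fun c => hc ⟨c.2.2.1, c.2.2.2⟩)]

lemma key_noconj {d : ℕ} (φ : Equiv.Perm (Fin d) →* MulAut (CliffordGroup d))
    (hφ : ∀ (σ : Equiv.Perm (Fin d)) (i : Fin d), φ σ (cliffXi i) = cliffXi (σ i))
    (hφε : ∀ σ : Equiv.Perm (Fin d), φ σ (cliffEps d) = cliffEps d)
    (g : Equiv.Perm (Fin d))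
    (hodd' : ∀ i ∈ g.support, Odd (g.cycleOf i).support.card) :
    ¬ IsConj (SemidirectProduct.inr g : CliffordGroup d ⋊[φ] Equiv.Perm (Fin d))
      (SemidirectProduct.inl (cliffEps d) * SemidirectProduct.inr g) := by
  intro h
  obtain ⟨cc, hcc⟩ := isConj_iff.1 h
  have hσ : cc.right * g * cc.right⁻¹ = g := by
    have h1 := congrArg SemidirectProduct.right hcc
    simpa using h1
  have h2 := congrArg SemidirectProduct.left hcc
  simp only [SemidirectProduct.mul_left, SemidirectProduct.inv_left,
    SemidirectProduct.left_inr, SemidirectProduct.right_inr, SemidirectProduct.mul_right,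
    SemidirectProduct.left_inl, SemidirectProduct.right_inl, map_one, mul_one, one_mul,
    ← MulAut.mul_apply, ← map_mul] at h2
  rw [hσ] at h2
  -- h2 : cc.left * φ g cc.left⁻¹ = cliffEps d
  have hb := congrArg (fhom d) h2
  rw [map_mul, fhom_eps, fhom_equivariant φ hφ hφε g, map_inv] at hb
  set b := fhom d cc.left with hbdef
  -- hb : b * (psi g b)⁻¹ = ⟨1, 0⟩
  have hv : b.v ∘ ⇑g⁻¹ = b.v := by
    have h3 := congrArg CW.v hb
    simp only [CW.mul_v, CW.inv_v, psi_v] at h3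
    funext x
    have h4 := congrFun h3 x
    have h5 : ∀ u w : ZMod 2, u + w = 0 → w = u := by decide
    exact h5 _ _ h4
  have hR : Rq g b.v = 1 := by
    have h3 := congrArg CW.s hb
    simp only [CW.mul_s, CW.inv_s, CW.inv_v, psi_s, psi_v, hv] at h3
    have h2s : b.s + b.s = (0 : ZMod 2) := CharTwo.add_self_eq_zero _
    have hqq : qf b.v b.v + qf b.v b.v = (0 : ZMod 2) := CharTwo.add_self_eq_zero _
    linear_combination h3 - h2s - hqq
  set S := Finset.univ.filter fun i => b.v i = 1 with hSdef
  have hSg : ∀ i ∈ S, g i ∈ S := by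
    intro i hi
    rw [hSdef, Finset.mem_filter] at hi ⊢
    refine ⟨Finset.mem_univ _, ?_⟩
    have h4 := congrFun hv (g i)
    simp only [Function.comp_apply, show ∀ x, g⁻¹ (g x) = x from g.symm_apply_apply] at h4
    rw [← h4]
    exact hi.2
  have hzero := crux g hodd' S hSg
  rw [← Rq_eq_cnt] at hzero
  rw [hR] at hzero
  exact absurd hzero (by decide)

end Stmt8

open SemidirectProduct

/-- For a pure permutation `g ∈ S(d) ⊂ C(d)` with odd cycle type `γ`, the conjugacy
class `C_γ` of `g` in the Sergeev group and its translate `εC_γ` are disjoint, and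
`εC_γ` is again a conjugacy class (that of `ε·g`). -/
theorem stmt_8 (d : ℕ) (φ : Equiv.Perm (Fin d) →* MulAut (CliffordGroup d))
    (hφ : ∀ (σ : Equiv.Perm (Fin d)) (i : Fin d), φ σ (cliffXi i) = cliffXi (σ i))
    (hφε : ∀ σ : Equiv.Perm (Fin d), φ σ (cliffEps d) = cliffEps d)
    (g : Equiv.Perm (Fin d)) (γ : Nat.Partition d)
    (hg : (Equiv.Perm.partition g).parts = γ.parts)
    (hodd : ∀ p ∈ γ.parts, Odd p) :
    Disjoint {x : CliffordGroup d ⋊[φ] Equiv.Perm (Fin d) | IsConj (inr g) x}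
        ((fun x => inl (cliffEps d) * x) ''
          {x : CliffordGroup d ⋊[φ] Equiv.Perm (Fin d) | IsConj (inr g) x}) ∧
      (fun x => inl (cliffEps d) * x) ''
          {x : CliffordGroup d ⋊[φ] Equiv.Perm (Fin d) | IsConj (inr g) x} =
        {x : CliffordGroup d ⋊[φ] Equiv.Perm (Fin d) |
          IsConj (inl (cliffEps d) * inr g) x} := by
  classical
  have hodd' : ∀ i ∈ g.support, Odd (g.cycleOf i).support.card := by
    intro i hi
    have h1 : (g.cycleOf i).support.card ∈ g.cycleType := by
      rw [Equiv.Perm.cycleType_def]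
      exact Multiset.mem_map_of_mem _
        (Finset.mem_def.1 (Equiv.Perm.cycleOf_mem_cycleFactorsFinset_iff.2 hi))
    have h2 : (g.cycleOf i).support.card ∈ γ.parts := by
      rw [← hg, Equiv.Perm.parts_partition]
      exact Multiset.mem_add.2 (Or.inl h1)
    exact hodd _ h2
  set z : CliffordGroup d ⋊[φ] Equiv.Perm (Fin d) := inl (cliffEps d) with hz
  have hcent : ∀ w : CliffordGroup d ⋊[φ] Equiv.Perm (Fin d), z * w = w * z := by
    intro w
    ext
    · simp only [hz, mul_left, left_inl, right_inl, map_one, MulAut.one_apply, hφε]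
      exact Stmt8.eps_central w.left
    · simp [hz]
  have hmove : ∀ (cc w : CliffordGroup d ⋊[φ] Equiv.Perm (Fin d)),
      cc * (z * w) * cc⁻¹ = z * (cc * w * cc⁻¹) := by
    intro cc w
    rw [show cc * (z * w) = z * (cc * w) by rw [← mul_assoc, ← hcent cc, mul_assoc],
      mul_assoc, mul_assoc]
  have hnoconj := Stmt8.key_noconj φ hφ hφε g hodd'
  have himg : (fun x => inl (cliffEps d) * x) ''
      {x : CliffordGroup d ⋊[φ] Equiv.Perm (Fin d) | IsConj (inr g) x}
      = {x : CliffordGroup d ⋊[φ] Equiv.Perm (Fin d) | IsConj (inl (cliffEps d) * inr g) x}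
      := by
    ext x
    simp only [Set.mem_image, Set.mem_setOf_eq]
    constructor
    · rintro ⟨y, hy, rfl⟩
      obtain ⟨cc, hcc⟩ := isConj_iff.1 hy
      exact isConj_iff.2 ⟨cc, by rw [hmove, hcc]⟩
    · intro hx
      obtain ⟨cc, hcc⟩ := isConj_iff.1 hx
      exact ⟨cc * inr g * cc⁻¹, isConj_iff.2 ⟨cc, rfl⟩, by rw [← hmove, hcc]⟩
  refine ⟨?_, himg⟩
  rw [himg]
  rw [Set.disjoint_left]
  intro x hx hx2
  simp only [Set.mem_setOf_eq] at hx hx2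
  exact hnoconj (hx.trans hx2.symm)
end

section
/- Assume the orthogonality Σ_{γ∈OP(d)} ϑ_γ f_γ(λ) f_γ(μ) = δ_{λμ}/(2c_λ²) if λ ∈ SP⁺(d) and = δ_{λμ}/c_λ² if λ ∈ SP⁻(d). Define H(h,±)_{α_1,…,α_k} = Σ_{λ∈SP⁺(d)} 2^{1−h} c_λ^{2−2h} ∏_i f_{α_i}(λ) ± Σ_{λ∈SP⁻(d)} c_λ^{2−2h} ∏_i f_{α_i}(λ). Then for all h₁, h₂ ≥ 0, parities p₁, p₂ ∈ {±} and odd partitions α_1,…,α_s, β_1,…,β_r: H(h₁+h₂, p₁·p₂)_{α_1,…,α_s,β_1,…,β_r} = Σ_{γ∈OP(d)} ϑ_γ · H(h₁,p₁)_{α_1,…,α_s,γ} · H(h₂,p₂)_{β_1,…,β_r,γ}. -/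
open Finset

/-- Gunningham's closed formula for the (normalized) spin Hurwitz numbers:
`H(h,s)_{α₁,…,α_k} = ∑_{λ∈SP⁺} 2^{1−h} c_λ^{2−2h} ∏ f_{αᵢ}(λ) + s·∑_{λ∈SP⁻} c_λ^{2−2h} ∏ f_{αᵢ}(λ)`
where the sign `s ∈ {1,−1}` records the parity. -/
noncomputable def gunninghamH {Γ Λ : Type*} [Fintype Λ]
    (plus : Λ → Prop) [DecidablePred plus] (c : Λ → ℝ) (f : Γ → Λ → ℝ)
    (h : ℕ) (s : ℝ) {k : ℕ} (α : Fin k → Γ) : ℝ :=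
  (∑ lam ∈ univ.filter plus,
      (2 : ℝ) ^ ((1 : ℤ) - h) * c lam ^ ((2 : ℤ) - 2 * h) * ∏ i, f (α i) lam) +
    s * ∑ lam ∈ univ.filter fun lam => ¬ plus lam,
      c lam ^ ((2 : ℤ) - 2 * h) * ∏ i, f (α i) lam

lemma glue_key {Γ Λ : Type*} [Fintype Γ] (f : Γ → Λ → ℝ) (ϑ : Γ → ℝ) (D : Λ → ℝ)
    [DecidableEq Λ]
    (horth : ∀ l m, ∑ γ : Γ, ϑ γ * f γ l * f γ m = if l = m then D l else 0)
    (S T : Finset Λ) (w u : Λ → ℝ) :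
    ∑ γ : Γ, ϑ γ * (∑ l ∈ S, w l * f γ l) * (∑ m ∈ T, u m * f γ m)
    = ∑ l ∈ S, (if l ∈ T then w l * u l * D l else 0) := by
  have step : ∀ γ : Γ, ϑ γ * (∑ l ∈ S, w l * f γ l) * (∑ m ∈ T, u m * f γ m)
      = ∑ l ∈ S, ∑ m ∈ T, w l * u m * (ϑ γ * f γ l * f γ m) := by
    intro γ
    rw [mul_assoc, Finset.sum_mul_sum, Finset.mul_sum]
    refine Finset.sum_congr rfl fun l _ => ?_
    rw [Finset.mul_sum]
    refine Finset.sum_congr rfl fun m _ => ?_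
    ring
  simp_rw [step]
  rw [Finset.sum_comm]
  refine Finset.sum_congr rfl fun l _ => ?_
  rw [Finset.sum_comm]
  have : ∀ m ∈ T, ∑ γ : Γ, w l * u m * (ϑ γ * f γ l * f γ m)
      = w l * u m * (if l = m then D l else 0) := by
    intro m _
    rw [← Finset.mul_sum, horth]
  rw [Finset.sum_congr rfl this]
  by_cases hlT : l ∈ T
  · rw [if_pos hlT, Finset.sum_eq_single l]
    · simp
    · intro m hm hml; simp [Ne.symm hml]
    · intro h; exact absurd hlT h
  · rw [if_neg hlT]
    refine Finset.sum_eq_zero fun m hm => ?_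
    have : l ≠ m := fun h => hlT (h ▸ hm)
    simp [this]


/-- Gunningham's formula implies the Lee–Parker gluing theorem: assuming the
orthogonality `∑_γ ϑ_γ f_γ(λ) f_γ(μ) = δ_{λμ}/(2c_λ²)` for `λ ∈ SP⁺` and
`= δ_{λμ}/c_λ²` for `λ ∈ SP⁻`, one has
`H(h₁+h₂, s₁s₂)_{α,β} = ∑_γ ϑ_γ H(h₁,s₁)_{α,γ} H(h₂,s₂)_{β,γ}`. -/
theorem stmt_16 {Γ Λ : Type*} [Fintype Γ] [Fintype Λ] [DecidableEq Λ]
    (plus : Λ → Prop) [DecidablePred plus]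
    (f : Γ → Λ → ℝ) (ϑ : Γ → ℝ) (c : Λ → ℝ)
    (hϑ : ∀ γ, 0 < ϑ γ) (hc : ∀ lam, 0 < c lam)
    (horth : ∀ lam mu : Λ,
      ∑ γ : Γ, ϑ γ * f γ lam * f γ mu =
        if lam = mu then (if plus lam then 1 / (2 * c lam ^ 2) else 1 / c lam ^ 2) else 0)
    (h₁ h₂ : ℕ) (s₁ s₂ : ℝ) (hs₁ : s₁ = 1 ∨ s₁ = -1) (hs₂ : s₂ = 1 ∨ s₂ = -1)
    {s r : ℕ} (α : Fin s → Γ) (β : Fin r → Γ) :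
    gunninghamH plus c f (h₁ + h₂) (s₁ * s₂) (Fin.append α β) =
      ∑ γ : Γ, ϑ γ * gunninghamH plus c f h₁ s₁ (Fin.snoc α γ) *
        gunninghamH plus c f h₂ s₂ (Fin.snoc β γ) := by
  classical
  set P : Finset Λ := univ.filter plus with hPdef
  set N : Finset Λ := univ.filter (fun l => ¬ plus l) with hNdef
  set D : Λ → ℝ := fun lam => if plus lam then 1 / (2 * c lam ^ 2) else 1 / c lam ^ 2 with hDdef
  set Pα : Λ → ℝ := fun l => ∏ i, f (α i) l with hPα
  set Pβ : Λ → ℝ := fun l => ∏ i, f (β i) l with hPβ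
  set w1 : Λ → ℝ := fun l => (2:ℝ) ^ ((1:ℤ) - h₁) * c l ^ ((2:ℤ) - 2 * h₁) * Pα l with hw1
  set u1 : Λ → ℝ := fun l => c l ^ ((2:ℤ) - 2 * h₁) * Pα l with hu1
  set w2 : Λ → ℝ := fun l => (2:ℝ) ^ ((1:ℤ) - h₂) * c l ^ ((2:ℤ) - 2 * h₂) * Pβ l with hw2
  set u2 : Λ → ℝ := fun l => c l ^ ((2:ℤ) - 2 * h₂) * Pβ l with hu2
  have horth' : ∀ l m, ∑ γ : Γ, ϑ γ * f γ l * f γ m = if l = m then D l else 0 := horth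
  have hG1 : ∀ γ, gunninghamH plus c f h₁ s₁ (Fin.snoc α γ) =
      (∑ l ∈ P, w1 l * f γ l) + s₁ * ∑ l ∈ N, u1 l * f γ l := by
    intro γ
    unfold gunninghamH
    congr 1
    · refine Finset.sum_congr rfl fun l _ => ?_
      rw [Fin.prod_univ_castSucc]
      simp only [Fin.snoc_castSucc, Fin.snoc_last, hw1, hPα]
      ring
    · rw [hNdef]
      congr 1
      refine Finset.sum_congr rfl fun l _ => ?_
      rw [Fin.prod_univ_castSucc]
      simp only [Fin.snoc_castSucc, Fin.snoc_last, hu1, hPα]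
      ring
  have hG2 : ∀ γ, gunninghamH plus c f h₂ s₂ (Fin.snoc β γ) =
      (∑ l ∈ P, w2 l * f γ l) + s₂ * ∑ l ∈ N, u2 l * f γ l := by
    intro γ
    unfold gunninghamH
    congr 1
    · refine Finset.sum_congr rfl fun l _ => ?_
      rw [Fin.prod_univ_castSucc]
      simp only [Fin.snoc_castSucc, Fin.snoc_last, hw2, hPβ]
      ring
    · rw [hNdef]
      congr 1
      refine Finset.sum_congr rfl fun l _ => ?_
      rw [Fin.prod_univ_castSucc]
      simp only [Fin.snoc_castSucc, Fin.snoc_last, hu2, hPβ]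
      ring
  -- expand the RHS into four bilinear sums
  have hRHS : ∑ γ : Γ, ϑ γ * gunninghamH plus c f h₁ s₁ (Fin.snoc α γ) *
        gunninghamH plus c f h₂ s₂ (Fin.snoc β γ)
      = (∑ γ : Γ, ϑ γ * (∑ l ∈ P, w1 l * f γ l) * (∑ m ∈ P, w2 m * f γ m))
        + s₂ * (∑ γ : Γ, ϑ γ * (∑ l ∈ P, w1 l * f γ l) * (∑ m ∈ N, u2 m * f γ m))
        + s₁ * (∑ γ : Γ, ϑ γ * (∑ l ∈ N, u1 l * f γ l) * (∑ m ∈ P, w2 m * f γ m))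
        + s₁ * s₂ * (∑ γ : Γ, ϑ γ * (∑ l ∈ N, u1 l * f γ l) * (∑ m ∈ N, u2 m * f γ m)) := by
    rw [Finset.mul_sum, Finset.mul_sum, Finset.mul_sum, ← Finset.sum_add_distrib,
      ← Finset.sum_add_distrib, ← Finset.sum_add_distrib]
    refine Finset.sum_congr rfl fun γ _ => ?_
    rw [hG1, hG2]
    ring
  rw [hRHS]
  have hPN : ∀ l ∈ P, l ∉ N := by
    intro l hl hln
    rw [hPdef, Finset.mem_filter] at hl
    rw [hNdef, Finset.mem_filter] at hln
    exact hln.2 hl.2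
  have hNP : ∀ l ∈ N, l ∉ P := by
    intro l hl hlp
    exact hPN l hlp hl
  rw [glue_key f ϑ D horth' P P w1 w2, glue_key f ϑ D horth' P N w1 u2,
    glue_key f ϑ D horth' N P u1 w2, glue_key f ϑ D horth' N N u1 u2]
  have hcross1 : (∑ l ∈ P, if l ∈ N then w1 l * u2 l * D l else 0) = 0 :=
    Finset.sum_eq_zero fun l hl => if_neg (hPN l hl)
  have hcross2 : (∑ l ∈ N, if l ∈ P then u1 l * w2 l * D l else 0) = 0 :=
    Finset.sum_eq_zero fun l hl => if_neg (hNP l hl)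
  rw [hcross1, hcross2, mul_zero, mul_zero, add_zero, add_zero]
  -- now compute LHS
  have happ : ∀ l, (∏ i, f (Fin.append α β i) l) = Pα l * Pβ l := by
    intro l
    rw [Fin.prod_univ_add]
    simp [hPα, hPβ]
  have hc2 : ∀ l, c l ≠ 0 := fun l => (hc l).ne'
  have h2e : (2:ℝ) ^ ((1:ℤ) - (h₁ + h₂ : ℕ)) * 2 = 2 ^ ((1:ℤ) - h₁) * 2 ^ ((1:ℤ) - h₂) := by
    rw [← zpow_add₀ (two_ne_zero (α := ℝ)) ((1:ℤ) - h₁) ((1:ℤ) - h₂),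
      show ((1:ℤ) - h₁) + ((1:ℤ) - h₂) = ((1:ℤ) - (h₁ + h₂ : ℕ)) + 1 by push_cast; ring,
      zpow_add₀ (two_ne_zero (α := ℝ)), zpow_one]
  have hce : ∀ l, c l ^ ((2:ℤ) - 2 * (h₁ + h₂ : ℕ)) * c l ^ 2
      = c l ^ ((2:ℤ) - 2 * h₁) * c l ^ ((2:ℤ) - 2 * h₂) := by
    intro l
    rw [show (c l ^ 2 : ℝ) = c l ^ ((2:ℕ) : ℤ) from (zpow_natCast _ 2).symm,
      ← zpow_add₀ (hc2 l), ← zpow_add₀ (hc2 l)]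
    congr 1
    push_cast
    ring
  unfold gunninghamH
  congr 1
  · refine Finset.sum_congr rfl fun l hl => ?_
    have hplus : plus l := by
      rw [hPdef, Finset.mem_filter] at hl; exact hl.2
    rw [if_pos hl, happ l]
    rw [hDdef]
    simp only [if_pos hplus, hw1, hw2]
    have h2c : (2 : ℝ) * c l ^ 2 ≠ 0 := mul_ne_zero two_ne_zero (pow_ne_zero 2 (hc2 l))
    rw [mul_one_div, eq_div_iff h2c]
    calc (2:ℝ) ^ ((1:ℤ) - (h₁ + h₂ : ℕ)) * c l ^ ((2:ℤ) - 2 * (h₁ + h₂ : ℕ)) * (Pα l * Pβ l)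
          * (2 * c l ^ 2)
        = ((2:ℝ) ^ ((1:ℤ) - (h₁ + h₂ : ℕ)) * 2) * (c l ^ ((2:ℤ) - 2 * (h₁ + h₂ : ℕ)) * c l ^ 2)
          * (Pα l * Pβ l) := by ring
      _ = ((2:ℝ) ^ ((1:ℤ) - h₁) * 2 ^ ((1:ℤ) - h₂))
          * (c l ^ ((2:ℤ) - 2 * h₁) * c l ^ ((2:ℤ) - 2 * h₂)) * (Pα l * Pβ l) := by
          rw [h2e, hce]
      _ = (2:ℝ) ^ ((1:ℤ) - h₁) * c l ^ ((2:ℤ) - 2 * h₁) * Pα l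
          * ((2:ℝ) ^ ((1:ℤ) - h₂) * c l ^ ((2:ℤ) - 2 * h₂) * Pβ l) := by ring
  · congr 1
    refine Finset.sum_congr rfl fun l hl => ?_
    have hplus : ¬ plus l := by
      rw [hNdef, Finset.mem_filter] at hl; exact hl.2
    rw [if_pos hl, happ l]
    rw [hDdef]
    simp only [if_neg hplus, hu1, hu2]
    have h2c : (c l : ℝ) ^ 2 ≠ 0 := pow_ne_zero 2 (hc2 l)
    rw [mul_one_div, eq_div_iff h2c]
    calc c l ^ ((2:ℤ) - 2 * (h₁ + h₂ : ℕ)) * (Pα l * Pβ l) * c l ^ 2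
        = (c l ^ ((2:ℤ) - 2 * (h₁ + h₂ : ℕ)) * c l ^ 2) * (Pα l * Pβ l) := by ring
      _ = (c l ^ ((2:ℤ) - 2 * h₁) * c l ^ ((2:ℤ) - 2 * h₂)) * (Pα l * Pβ l) := by rw [hce]
      _ = c l ^ ((2:ℤ) - 2 * h₁) * Pα l * (c l ^ ((2:ℤ) - 2 * h₂) * Pβ l) := by ring
end
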